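/- arXiv:1702.03724 — 5 statements merged into one kernel-verified Lean document; each statement's English description precedes it below -/
import Mathlib

section
/- Let Γ₁ be the complex extension of Γ₁* along block S₁ and Γ₂ the complex extension of Γ₂* along block S₂. Then unCD(Γ₁,Γ₂) = unCD(Γ₁*,Γ₂*) + |S₁ \ S₂| + |S₂ \ S₁|. -/
open Finset

/-- `i` and `j` lie in the same block of the partition `Γ`. -/
def samePart {n : ℕ} (Γ : Finpartition (univ : Finset (Fin n))) (i j : Fin n) : Prop :=
  ∃ S ∈ Γ.parts, i ∈ S ∧ j ∈ S

open scoped Classical in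
/-- Unnormalized Cluster Difference between two partitions of `{1,…,n}`. -/
noncomputable def unCD {n : ℕ} (Γ₁ Γ₂ : Finpartition (univ : Finset (Fin n))) : ℕ :=
  ((univ : Finset (Fin n × Fin n)).filter
    (fun p => p.1 < p.2 ∧ ¬ (samePart Γ₁ p.1 p.2 ↔ samePart Γ₂ p.1 p.2))).card

/-- `Γ` is the simple extension of `Γs`: blocks of `Γs` (reindexed) plus the singleton `{n+1}`. -/
def IsSimpleExt {n : ℕ} (Γs : Finpartition (univ : Finset (Fin n)))
    (Γ : Finpartition (univ : Finset (Fin (n + 1)))) : Prop :=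
  Γ.parts = insert {Fin.last n} (Γs.parts.image (fun S => S.image Fin.castSucc))

/-- `Γ` is the complex extension of `Γs` along its block `S`:
the element `n+1` is added to the block `S`. -/
def IsComplexExt {n : ℕ} (Γs : Finpartition (univ : Finset (Fin n))) (S : Finset (Fin n))
    (Γ : Finpartition (univ : Finset (Fin (n + 1)))) : Prop :=
  S ∈ Γs.parts ∧
    Γ.parts = insert (insert (Fin.last n) (S.image Fin.castSucc))
      ((Γs.parts.erase S).image (fun T => T.image Fin.castSucc))

/-- `Γ` is an extension of `Γs` (equivalently, `Γs` is the reduct of `Γ`). -/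
def IsExt {n : ℕ} (Γs : Finpartition (univ : Finset (Fin n)))
    (Γ : Finpartition (univ : Finset (Fin (n + 1)))) : Prop :=
  IsSimpleExt Γs Γ ∨ ∃ S, IsComplexExt Γs S Γ

noncomputable instance {n : ℕ} : Fintype (Finpartition (univ : Finset (Fin n))) :=
  Fintype.ofInjective Finpartition.parts (fun _ _ h => Finpartition.ext h)

noncomputable instance {n : ℕ} : DecidableEq (Finpartition (univ : Finset (Fin n))) :=
  Classical.decEq _

lemma samePart_castSucc {n : ℕ} {Γs : Finpartition (univ : Finset (Fin n))} {S : Finset (Fin n)}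
    {Γ : Finpartition (univ : Finset (Fin (n + 1)))} (h : IsComplexExt Γs S Γ) (i j : Fin n) :
    samePart Γ i.castSucc j.castSucc ↔ samePart Γs i j := by
  obtain ⟨hS, hp⟩ := h
  constructor
  · rintro ⟨T, hT, hi, hj⟩
    rw [hp, mem_insert] at hT
    rcases hT with rfl | hT
    · refine ⟨S, hS, ?_, ?_⟩
      · rcases mem_insert.1 hi with h' | h'
        · exact absurd h' (Fin.castSucc_lt_last i).ne
        · obtain ⟨a, ha, hae⟩ := mem_image.1 h'
          rwa [Fin.castSucc_injective n hae] at ha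
      · rcases mem_insert.1 hj with h' | h'
        · exact absurd h' (Fin.castSucc_lt_last j).ne
        · obtain ⟨a, ha, hae⟩ := mem_image.1 h'
          rwa [Fin.castSucc_injective n hae] at ha
    · obtain ⟨T', hT', rfl⟩ := mem_image.1 hT
      obtain ⟨a, ha, hae⟩ := mem_image.1 hi
      obtain ⟨b, hb, hbe⟩ := mem_image.1 hj
      exact ⟨T', mem_of_mem_erase hT', by rwa [Fin.castSucc_injective n hae] at ha,
        by rwa [Fin.castSucc_injective n hbe] at hb⟩
  · rintro ⟨U, hU, hi, hj⟩
    by_cases hUS : U = S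
    · subst hUS
      exact ⟨_, by rw [hp]; exact mem_insert_self _ _,
        mem_insert_of_mem (mem_image_of_mem _ hi), mem_insert_of_mem (mem_image_of_mem _ hj)⟩
    · exact ⟨U.image Fin.castSucc, by
        rw [hp]; exact mem_insert_of_mem (mem_image_of_mem _ (mem_erase.2 ⟨hUS, hU⟩)),
        mem_image_of_mem _ hi, mem_image_of_mem _ hj⟩

lemma samePart_last {n : ℕ} {Γs : Finpartition (univ : Finset (Fin n))} {S : Finset (Fin n)}
    {Γ : Finpartition (univ : Finset (Fin (n + 1)))} (h : IsComplexExt Γs S Γ) (i : Fin n) :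
    samePart Γ i.castSucc (Fin.last n) ↔ i ∈ S := by
  obtain ⟨hS, hp⟩ := h
  constructor
  · rintro ⟨T, hT, hi, hl⟩
    rw [hp, mem_insert] at hT
    rcases hT with rfl | hT
    · rcases mem_insert.1 hi with h' | h'
      · exact absurd h' (Fin.castSucc_lt_last i).ne
      · obtain ⟨a, ha, hae⟩ := mem_image.1 h'
        rwa [Fin.castSucc_injective n hae] at ha
    · obtain ⟨T', hT', rfl⟩ := mem_image.1 hT
      obtain ⟨a, _, hae⟩ := mem_image.1 hl
      exact absurd hae (Fin.castSucc_lt_last a).ne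
  · intro hi
    exact ⟨_, by rw [hp]; exact mem_insert_self _ _,
      mem_insert_of_mem (mem_image_of_mem _ hi), mem_insert_self _ _⟩

open scoped Classical in
theorem stmt6' {n : ℕ} {S₁ S₂ : Finset (Fin n)}
    {P₁ P₂ : Fin (n+1) → Fin (n+1) → Prop} {Q₁ Q₂ : Fin n → Fin n → Prop}
    (hc : ∀ i j : Fin n, (P₁ i.castSucc j.castSucc ↔ Q₁ i j) ∧ (P₂ i.castSucc j.castSucc ↔ Q₂ i j))
    (hl : ∀ i : Fin n, (P₁ i.castSucc (Fin.last n) ↔ i ∈ S₁) ∧ (P₂ i.castSucc (Fin.last n) ↔ i ∈ S₂)) :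
    ((univ : Finset (Fin (n+1) × Fin (n+1))).filter
      (fun p => p.1 < p.2 ∧ ¬ (P₁ p.1 p.2 ↔ P₂ p.1 p.2))).card =
    ((univ : Finset (Fin n × Fin n)).filter
      (fun p => p.1 < p.2 ∧ ¬ (Q₁ p.1 p.2 ↔ Q₂ p.1 p.2))).card + (S₁ \ S₂).card + (S₂ \ S₁).card := by
  have hsplit := Finset.card_filter_add_card_filter_not
    (s := (univ : Finset (Fin (n+1) × Fin (n+1))).filter
      (fun p => p.1 < p.2 ∧ ¬ (P₁ p.1 p.2 ↔ P₂ p.1 p.2)))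
    (p := fun p => p.2 = Fin.last n)
  rw [Finset.filter_filter, Finset.filter_filter] at hsplit
  have e1 : ((univ : Finset (Fin (n+1) × Fin (n+1))).filter
      (fun p => (p.1 < p.2 ∧ ¬ (P₁ p.1 p.2 ↔ P₂ p.1 p.2)) ∧ ¬ p.2 = Fin.last n)).card =
      ((univ : Finset (Fin n × Fin n)).filter
      (fun p => p.1 < p.2 ∧ ¬ (Q₁ p.1 p.2 ↔ Q₂ p.1 p.2))).card := by
    symm
    apply Finset.card_bij (fun p _ => (Fin.castSucc p.1, Fin.castSucc p.2))
    · rintro ⟨i, j⟩ hp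
      simp only [mem_filter, mem_univ, true_and] at hp ⊢
      obtain ⟨hij, hne⟩ := hp
      refine ⟨⟨Fin.castSucc_lt_castSucc_iff.2 hij, ?_⟩, (Fin.castSucc_lt_last j).ne⟩
      rw [(hc i j).1, (hc i j).2]; exact hne
    · rintro ⟨i, j⟩ _ ⟨i', j'⟩ _ h
      simp only [Prod.mk.injEq] at h
      exact Prod.ext (Fin.castSucc_injective n h.1) (Fin.castSucc_injective n h.2)
    · rintro ⟨x, y⟩ hq
      simp only [mem_filter, mem_univ, true_and] at hq
      obtain ⟨⟨hxy, hne⟩, hy⟩ := hq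
      obtain ⟨j, rfl⟩ := Fin.exists_castSucc_eq.2 hy
      have hx : x ≠ Fin.last n := (hxy.trans (Fin.castSucc_lt_last j)).ne
      obtain ⟨i, rfl⟩ := Fin.exists_castSucc_eq.2 hx
      refine ⟨(i, j), ?_, rfl⟩
      simp only [mem_filter, mem_univ, true_and]
      refine ⟨Fin.castSucc_lt_castSucc_iff.1 hxy, ?_⟩
      rw [← (hc i j).1, ← (hc i j).2]; exact hne
  have e2 : ((univ : Finset (Fin (n+1) × Fin (n+1))).filter
      (fun p => (p.1 < p.2 ∧ ¬ (P₁ p.1 p.2 ↔ P₂ p.1 p.2)) ∧ p.2 = Fin.last n)).card =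
      (S₁ \ S₂).card + (S₂ \ S₁).card := by
    rw [← card_union_of_disjoint (disjoint_sdiff_sdiff : Disjoint (S₁ \ S₂) (S₂ \ S₁))]
    symm
    apply Finset.card_bij (fun a _ => (Fin.castSucc a, Fin.last n))
    · intro a ha
      simp only [mem_union, mem_sdiff] at ha
      simp only [mem_filter, mem_univ, true_and]
      refine ⟨⟨Fin.castSucc_lt_last a, ?_⟩, by trivial⟩
      rw [(hl a).1, (hl a).2]
      tauto
    · intro a _ b _ h
      simp only [Prod.mk.injEq] at h
      exact Fin.castSucc_injective n h.1
    · rintro ⟨x, y⟩ hq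
      simp only [mem_filter, mem_univ, true_and] at hq
      obtain ⟨⟨hxy, hne⟩, rfl⟩ := hq
      obtain ⟨i, rfl⟩ := Fin.exists_castSucc_eq.2 hxy.ne
      refine ⟨i, ?_, rfl⟩
      rw [(hl i).1, (hl i).2] at hne
      simp only [mem_union, mem_sdiff]
      tauto
  omega

theorem stmt6 {n : ℕ} {Γ₁s Γ₂s : Finpartition (univ : Finset (Fin n))} {S₁ S₂ : Finset (Fin n)}
    {Γ₁ Γ₂ : Finpartition (univ : Finset (Fin (n + 1)))}
    (h₁ : IsComplexExt Γ₁s S₁ Γ₁) (h₂ : IsComplexExt Γ₂s S₂ Γ₂) :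
    unCD Γ₁ Γ₂ = unCD Γ₁s Γ₂s + (S₁ \ S₂).card + (S₂ \ S₁).card := by
  classical
  unfold unCD
  exact stmt6' (fun i j => ⟨samePart_castSucc h₁ i j, samePart_castSucc h₂ i j⟩)
    (fun i => ⟨samePart_last h₁ i, samePart_last h₂ i⟩)
end

section
/- For a partition Γ* of {1,...,n} with k blocks, the sum of unCD distances from the complex extension Γ_{l'} (adding n+1 to block S_{l'}) to all other extensions of Γ* equals (k−1)·|S_{l'}| + n, which is at least n. -/
open Finset
open scoped symmDiff

lemma castSucc_ne_last {n : ℕ} (a : Fin n) : Fin.castSucc a ≠ Fin.last n :=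
  (Fin.castSucc_lt_last a).ne

lemma simple_cast {n : ℕ} {Γs : Finpartition (univ : Finset (Fin n))}
    {Γ₀ : Finpartition (univ : Finset (Fin (n + 1)))} (h₀ : IsSimpleExt Γs Γ₀)
    (a b : Fin n) : samePart Γ₀ (Fin.castSucc a) (Fin.castSucc b) ↔ samePart Γs a b := by
  unfold samePart
  rw [h₀]
  constructor
  · rintro ⟨T, hT, ha, hb⟩
    rcases mem_insert.1 hT with rfl | hT
    · exact absurd (mem_singleton.1 ha) (castSucc_ne_last a)
    · obtain ⟨U, hU, rfl⟩ := mem_image.1 hT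
      obtain ⟨a', ha', hea⟩ := mem_image.1 ha
      obtain ⟨b', hb', heb⟩ := mem_image.1 hb
      rw [Fin.castSucc_inj.1 hea] at ha'
      rw [Fin.castSucc_inj.1 heb] at hb'
      exact ⟨U, hU, ha', hb'⟩
  · rintro ⟨U, hU, ha, hb⟩
    exact ⟨U.image Fin.castSucc, mem_insert_of_mem (mem_image_of_mem _ hU),
      mem_image_of_mem _ ha, mem_image_of_mem _ hb⟩

lemma simple_last {n : ℕ} {Γs : Finpartition (univ : Finset (Fin n))}
    {Γ₀ : Finpartition (univ : Finset (Fin (n + 1)))} (h₀ : IsSimpleExt Γs Γ₀)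
    (a : Fin n) : ¬ samePart Γ₀ (Fin.castSucc a) (Fin.last n) := by
  rintro ⟨T, hT, ha, hl⟩
  rw [h₀] at hT
  rcases mem_insert.1 hT with rfl | hT
  · exact castSucc_ne_last a (mem_singleton.1 ha)
  · obtain ⟨U, hU, rfl⟩ := mem_image.1 hT
    obtain ⟨b, hb, heb⟩ := mem_image.1 hl
    exact castSucc_ne_last b heb

lemma complex_cast {n : ℕ} {Γs : Finpartition (univ : Finset (Fin n))} {S : Finset (Fin n)}
    {Γ : Finpartition (univ : Finset (Fin (n + 1)))} (h : IsComplexExt Γs S Γ)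
    (a b : Fin n) : samePart Γ (Fin.castSucc a) (Fin.castSucc b) ↔ samePart Γs a b := by
  obtain ⟨hS, hP⟩ := h
  unfold samePart
  rw [hP]
  constructor
  · rintro ⟨T, hT, ha, hb⟩
    rcases mem_insert.1 hT with rfl | hT
    · rcases mem_insert.1 ha with h1 | h1
      · exact absurd h1 (castSucc_ne_last a)
      rcases mem_insert.1 hb with h2 | h2
      · exact absurd h2 (castSucc_ne_last b)
      obtain ⟨a', ha', hea⟩ := mem_image.1 h1
      obtain ⟨b', hb', heb⟩ := mem_image.1 h2
      rw [Fin.castSucc_inj.1 hea] at ha'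
      rw [Fin.castSucc_inj.1 heb] at hb'
      exact ⟨S, hS, ha', hb'⟩
    · obtain ⟨U, hU, rfl⟩ := mem_image.1 hT
      obtain ⟨a', ha', hea⟩ := mem_image.1 ha
      obtain ⟨b', hb', heb⟩ := mem_image.1 hb
      rw [Fin.castSucc_inj.1 hea] at ha'
      rw [Fin.castSucc_inj.1 heb] at hb'
      exact ⟨U, mem_of_mem_erase hU, ha', hb'⟩
  · rintro ⟨U, hU, ha, hb⟩
    by_cases hUS : U = S
    · subst hUS
      exact ⟨_, mem_insert_self _ _,
        mem_insert_of_mem (mem_image_of_mem _ ha),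
        mem_insert_of_mem (mem_image_of_mem _ hb)⟩
    · exact ⟨U.image Fin.castSucc,
        mem_insert_of_mem (mem_image_of_mem _ (mem_erase.2 ⟨hUS, hU⟩)),
        mem_image_of_mem _ ha, mem_image_of_mem _ hb⟩

lemma complex_last {n : ℕ} {Γs : Finpartition (univ : Finset (Fin n))} {S : Finset (Fin n)}
    {Γ : Finpartition (univ : Finset (Fin (n + 1)))} (h : IsComplexExt Γs S Γ)
    (a : Fin n) : samePart Γ (Fin.castSucc a) (Fin.last n) ↔ a ∈ S := by
  obtain ⟨hS, hP⟩ := h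
  unfold samePart
  rw [hP]
  constructor
  · rintro ⟨T, hT, ha, hl⟩
    rcases mem_insert.1 hT with rfl | hT
    · rcases mem_insert.1 ha with h1 | h1
      · exact absurd h1 (castSucc_ne_last a)
      obtain ⟨a', ha', hea⟩ := mem_image.1 h1
      rwa [Fin.castSucc_inj.1 hea] at ha'
    · obtain ⟨U, hU, rfl⟩ := mem_image.1 hT
      obtain ⟨b, hb, heb⟩ := mem_image.1 hl
      exact absurd heb (castSucc_ne_last b)
  · intro haS
    exact ⟨_, mem_insert_self _ _, mem_insert_of_mem (mem_image_of_mem _ haS),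
      mem_insert_self _ _⟩

open scoped Classical in
lemma count_key {n : ℕ} {Γ₁ Γ₂ : Finpartition (univ : Finset (Fin (n + 1)))}
    {A B : Finset (Fin n)}
    (hcast : ∀ a b : Fin n,
      samePart Γ₁ (Fin.castSucc a) (Fin.castSucc b) ↔ samePart Γ₂ (Fin.castSucc a) (Fin.castSucc b))
    (h1 : ∀ a : Fin n, samePart Γ₁ (Fin.castSucc a) (Fin.last n) ↔ a ∈ A)
    (h2 : ∀ a : Fin n, samePart Γ₂ (Fin.castSucc a) (Fin.last n) ↔ a ∈ B) :
    unCD Γ₁ Γ₂ = (A ∆ B).card := by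
  unfold unCD
  rw [show ((univ : Finset (Fin (n+1) × Fin (n+1))).filter
      (fun p => p.1 < p.2 ∧ ¬ (samePart Γ₁ p.1 p.2 ↔ samePart Γ₂ p.1 p.2)))
      = (A ∆ B).image (fun a => (Fin.castSucc a, Fin.last n)) from ?_]
  · rw [card_image_of_injective _ (fun a b h => Fin.castSucc_inj.1 (Prod.ext_iff.1 h).1)]
  ext ⟨x, y⟩
  simp only [mem_filter, mem_univ, true_and, mem_image, Prod.mk.injEq]
  rcases Fin.eq_castSucc_or_eq_last y with ⟨b, rfl⟩ | rfl
  · constructor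
    · rintro ⟨hlt, hne⟩
      rcases Fin.eq_castSucc_or_eq_last x with ⟨a, rfl⟩ | rfl
      · exact absurd (hcast a b) hne
      · exact absurd hlt (not_lt.2 (Fin.castSucc_lt_last b).le)
    · rintro ⟨a, _, _, hlast⟩
      exact absurd hlast.symm (castSucc_ne_last b)
  · rcases Fin.eq_castSucc_or_eq_last x with ⟨a, rfl⟩ | rfl
    · constructor
      · rintro ⟨_, hne⟩
        refine ⟨a, ?_, rfl, rfl⟩
        rw [Finset.mem_symmDiff]
        rw [h1 a, h2 a] at hne
        by_cases ha : a ∈ A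
        · exact Or.inl ⟨ha, fun hb => hne ⟨fun _ => hb, fun _ => ha⟩⟩
        · refine Or.inr ⟨?_, ha⟩
          by_contra hb
          exact hne ⟨fun h => absurd h ha, fun h => absurd h hb⟩
      · rintro ⟨c, hc, hce, -⟩
        rw [Fin.castSucc_inj.1 hce] at hc
        rw [Finset.mem_symmDiff] at hc
        refine ⟨Fin.castSucc_lt_last a, ?_⟩
        rw [h1 a, h2 a]
        rcases hc with ⟨h3, h4⟩ | ⟨h3, h4⟩
        · exact fun hiff => h4 (hiff.1 h3)
        · exact fun hiff => h4 (hiff.2 h3)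
    · constructor
      · rintro ⟨hlt, -⟩
        exact absurd hlt (lt_irrefl _)
      · rintro ⟨c, -, hce, -⟩
        exact absurd hce (castSucc_ne_last c)

theorem stmt8 {n : ℕ} {Γs : Finpartition (univ : Finset (Fin n))}
    {Γ₀ : Finpartition (univ : Finset (Fin (n + 1)))} (h₀ : IsSimpleExt Γs Γ₀)
    (E : Finset (Fin n) → Finpartition (univ : Finset (Fin (n + 1))))
    (hE : ∀ S ∈ Γs.parts, IsComplexExt Γs S (E S))
    {S' : Finset (Fin n)} (hS' : S' ∈ Γs.parts) :
    unCD (E S') Γ₀ + ∑ S ∈ Γs.parts.erase S', unCD (E S') (E S)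
        = (Γs.parts.card - 1) * S'.card + n ∧
      n ≤ (Γs.parts.card - 1) * S'.card + n := by
  have hES' := hE S' hS'
  have key0 : unCD (E S') Γ₀ = S'.card := by
    have := count_key (Γ₁ := E S') (Γ₂ := Γ₀) (A := S') (B := (∅ : Finset (Fin n)))
      (fun a b => (complex_cast hES' a b).trans (simple_cast h₀ a b).symm)
      (fun a => complex_last hES' a)
      (fun a => ⟨fun h => absurd h (simple_last h₀ a), fun h => absurd h (notMem_empty a)⟩)
    have he : S' ∆ (∅ : Finset (Fin n)) = S' := by
      ext x; simp [Finset.mem_symmDiff]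
    rwa [he] at this
  have key1 : ∀ S ∈ Γs.parts.erase S', unCD (E S') (E S) = S'.card + S.card := by
    intro S hSe
    have hSp := mem_of_mem_erase hSe
    have hne : S' ≠ S := fun h => (mem_erase.1 hSe).1 h.symm
    have hdisj : Disjoint S' S := Γs.disjoint hS' hSp hne
    have := count_key (Γ₁ := E S') (Γ₂ := E S) (A := S') (B := S)
      (fun a b => (complex_cast hES' a b).trans (complex_cast (hE S hSp) a b).symm)
      (fun a => complex_last hES' a)
      (fun a => complex_last (hE S hSp) a)
    rw [hdisj.symmDiff_eq_sup] at this
    rw [this]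
    exact card_union_of_disjoint hdisj
  have hsum : ∑ S ∈ Γs.parts.erase S', unCD (E S') (E S)
      = (Γs.parts.card - 1) * S'.card + (n - S'.card) := by
    rw [Finset.sum_congr rfl key1, Finset.sum_add_distrib, Finset.sum_const, smul_eq_mul,
      card_erase_of_mem hS']
    congr 1
    have htot : ∑ S ∈ Γs.parts, S.card = n := by
      rw [Γs.sum_card_parts, card_univ, Fintype.card_fin]
    have := Finset.add_sum_erase Γs.parts Finset.card hS'
    omega
  have hle : S'.card ≤ n := by
    have := card_le_card (Γs.le hS')
    simpa using this
  constructor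
  · rw [key0, hsum]
    omega
  · exact Nat.le_add_left n _
end

section
/- Let Γ* and Γ*' be partitions of {1,...,n}, with Γ*' having k blocks. For a complex extension Γ_m of Γ* obtained by adding n+1 to block S_m ∈ Γ*, the sum of unCD distances from Γ_m to all k+1 extensions of Γ*' equals (k+1)·unCD(Γ*,Γ*') + (k−1)·|S_m| + n. -/
open Finset

lemma last_notin_image {n : ℕ} (T : Finset (Fin n)) :
    Fin.last n ∉ T.image Fin.castSucc := by
  simp only [mem_image, not_exists]
  rintro a ⟨ha, hae⟩
  exact (Fin.castSucc_lt_last a).ne hae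

lemma castSucc_mem_image {n : ℕ} {T : Finset (Fin n)} {i : Fin n} :
    i.castSucc ∈ T.image Fin.castSucc ↔ i ∈ T := by
  simp [Fin.castSucc_inj]

lemma complexExt_samePart_castSucc {n : ℕ} {Γs : Finpartition (univ : Finset (Fin n))}
    {Sm : Finset (Fin n)} {Γ : Finpartition (univ : Finset (Fin (n+1)))}
    (h : IsComplexExt Γs Sm Γ) (i j : Fin n) :
    samePart Γ i.castSucc j.castSucc ↔ samePart Γs i j := by
  obtain ⟨hSm, hp⟩ := h
  constructor
  · rintro ⟨B, hB, hiB, hjB⟩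
    rw [hp, mem_insert] at hB
    rcases hB with rfl | hB
    · refine ⟨Sm, hSm, ?_, ?_⟩
      · rcases mem_insert.1 hiB with h | h
        · exact absurd h (Fin.castSucc_lt_last i).ne
        · exact castSucc_mem_image.1 h
      · rcases mem_insert.1 hjB with h | h
        · exact absurd h (Fin.castSucc_lt_last j).ne
        · exact castSucc_mem_image.1 h
    · obtain ⟨T, hT, rfl⟩ := mem_image.1 hB
      exact ⟨T, mem_of_mem_erase hT, castSucc_mem_image.1 hiB, castSucc_mem_image.1 hjB⟩
  · rintro ⟨S, hS, hiS, hjS⟩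
    by_cases hSm' : S = Sm
    · subst hSm'
      exact ⟨_, by rw [hp]; exact mem_insert_self _ _,
        mem_insert_of_mem (castSucc_mem_image.2 hiS),
        mem_insert_of_mem (castSucc_mem_image.2 hjS)⟩
    · refine ⟨S.image Fin.castSucc, ?_, castSucc_mem_image.2 hiS, castSucc_mem_image.2 hjS⟩
      rw [hp]
      exact mem_insert_of_mem (mem_image_of_mem _ (mem_erase.2 ⟨hSm', hS⟩))

lemma complexExt_samePart_last {n : ℕ} {Γs : Finpartition (univ : Finset (Fin n))}
    {Sm : Finset (Fin n)} {Γ : Finpartition (univ : Finset (Fin (n+1)))}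
    (h : IsComplexExt Γs Sm Γ) (i : Fin n) :
    samePart Γ i.castSucc (Fin.last n) ↔ i ∈ Sm := by
  obtain ⟨hSm, hp⟩ := h
  constructor
  · rintro ⟨B, hB, hiB, hlB⟩
    rw [hp, mem_insert] at hB
    rcases hB with rfl | hB
    · rcases mem_insert.1 hiB with h | h
      · exact absurd h (Fin.castSucc_lt_last i).ne
      · exact castSucc_mem_image.1 h
    · obtain ⟨T, hT, rfl⟩ := mem_image.1 hB
      exact absurd hlB (last_notin_image T)
  · intro hi
    exact ⟨_, by rw [hp]; exact mem_insert_self _ _,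
      mem_insert_of_mem (castSucc_mem_image.2 hi), mem_insert_self _ _⟩

lemma simpleExt_samePart_castSucc {n : ℕ} {Γs : Finpartition (univ : Finset (Fin n))}
    {Γ : Finpartition (univ : Finset (Fin (n+1)))}
    (h : IsSimpleExt Γs Γ) (i j : Fin n) :
    samePart Γ i.castSucc j.castSucc ↔ samePart Γs i j := by
  rw [IsSimpleExt] at h
  constructor
  · rintro ⟨B, hB, hiB, hjB⟩
    rw [h, mem_insert] at hB
    rcases hB with rfl | hB
    · exact absurd (mem_singleton.1 hiB) (Fin.castSucc_lt_last i).ne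
    · obtain ⟨T, hT, rfl⟩ := mem_image.1 hB
      exact ⟨T, hT, castSucc_mem_image.1 hiB, castSucc_mem_image.1 hjB⟩
  · rintro ⟨S, hS, hiS, hjS⟩
    refine ⟨S.image Fin.castSucc, ?_, castSucc_mem_image.2 hiS, castSucc_mem_image.2 hjS⟩
    rw [h]
    exact mem_insert_of_mem (mem_image_of_mem _ hS)

lemma simpleExt_samePart_last {n : ℕ} {Γs : Finpartition (univ : Finset (Fin n))}
    {Γ : Finpartition (univ : Finset (Fin (n+1)))}
    (h : IsSimpleExt Γs Γ) (i : Fin n) :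
    ¬ samePart Γ i.castSucc (Fin.last n) := by
  rw [IsSimpleExt] at h
  rintro ⟨B, hB, hiB, hlB⟩
  rw [h, mem_insert] at hB
  rcases hB with rfl | hB
  · exact (Fin.castSucc_lt_last i).ne (mem_singleton.1 hiB)
  · obtain ⟨T, hT, rfl⟩ := mem_image.1 hB
    exact last_notin_image T hlB

open scoped Classical in
lemma unCD_ext {n : ℕ} {Γs Γs' : Finpartition (univ : Finset (Fin n))}
    {Γ Γ' : Finpartition (univ : Finset (Fin (n+1)))} {P P' : Finset (Fin n)}
    (h1 : ∀ i j, samePart Γ i.castSucc j.castSucc ↔ samePart Γs i j)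
    (h2 : ∀ i j, samePart Γ' i.castSucc j.castSucc ↔ samePart Γs' i j)
    (h3 : ∀ i, samePart Γ i.castSucc (Fin.last n) ↔ i ∈ P)
    (h4 : ∀ i, samePart Γ' i.castSucc (Fin.last n) ↔ i ∈ P') :
    unCD Γ Γ' = unCD Γs Γs' + ((P \ P').card + (P' \ P).card) := by
  classical
  unfold unCD
  set T := ((univ : Finset (Fin (n+1) × Fin (n+1))).filter
    (fun p => p.1 < p.2 ∧ ¬ (samePart Γ p.1 p.2 ↔ samePart Γ' p.1 p.2))) with hT
  rw [← Finset.card_filter_add_card_filter_not (s := T)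
    (p := fun p => p.2 = Fin.last n), add_comm]
  congr 1
  · -- pairs not involving last
    have hA : T.filter (fun p => ¬ p.2 = Fin.last n)
        = (((univ : Finset (Fin n × Fin n)).filter
            (fun p => p.1 < p.2 ∧ ¬ (samePart Γs p.1 p.2 ↔ samePart Γs' p.1 p.2))).image
          (fun p => (p.1.castSucc, p.2.castSucc))) := by
      ext ⟨a, b⟩
      simp only [hT, mem_filter, mem_image, mem_univ, true_and, Prod.mk.injEq, Prod.exists]
      constructor
      · rintro ⟨⟨hab, hdis⟩, hbl⟩
        obtain ⟨j, rfl⟩ := Fin.exists_castSucc_eq.2 hbl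
        obtain ⟨i, rfl⟩ := Fin.exists_castSucc_eq.2 (Fin.ne_last_of_lt hab)
        refine ⟨i, j, ⟨Fin.castSucc_lt_castSucc_iff.1 hab, ?_⟩, rfl, rfl⟩
        rw [← h1, ← h2]; exact hdis
      · rintro ⟨i, j, ⟨hij, hdis⟩, rfl, rfl⟩
        refine ⟨⟨Fin.castSucc_lt_castSucc_iff.2 hij, ?_⟩, (Fin.castSucc_lt_last j).ne⟩
        rw [h1, h2]; exact hdis
    rw [hA, card_image_of_injective]
    intro p q hpq
    simp only [Prod.mk.injEq] at hpq
    exact Prod.ext (Fin.castSucc_injective n hpq.1) (Fin.castSucc_injective n hpq.2)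
  · -- pairs involving last
    have hB : T.filter (fun p => p.2 = Fin.last n)
        = ((P \ P') ∪ (P' \ P)).image (fun i => (i.castSucc, Fin.last n)) := by
      ext ⟨a, b⟩
      simp only [hT, mem_filter, mem_image, mem_univ, true_and, Prod.mk.injEq,
        mem_union, mem_sdiff]
      constructor
      · rintro ⟨⟨hab, hdis⟩, rfl⟩
        obtain ⟨i, rfl⟩ := Fin.exists_castSucc_eq.2 (Fin.ne_last_of_lt hab)
        rw [h3, h4] at hdis
        refine ⟨i, ?_, rfl, rfl⟩
        by_cases hp : i ∈ P <;> by_cases hp' : i ∈ P' <;> tauto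
      · rintro ⟨i, hi, rfl, rfl⟩
        refine ⟨⟨Fin.castSucc_lt_last i, ?_⟩, rfl⟩
        rw [h3, h4]
        rcases hi with ⟨h, h'⟩ | ⟨h, h'⟩ <;> tauto
    rw [hB, card_image_of_injective, card_union_of_disjoint (disjoint_sdiff_sdiff)]
    intro p q hpq
    simp only [Prod.mk.injEq] at hpq
    exact Fin.castSucc_injective n hpq.1

theorem stmt11 {n : ℕ} {Γs Γs' : Finpartition (univ : Finset (Fin n))} {Sm : Finset (Fin n)}
    {Γm Γ₀' : Finpartition (univ : Finset (Fin (n + 1)))}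
    (hm : IsComplexExt Γs Sm Γm) (h₀' : IsSimpleExt Γs' Γ₀')
    (E' : Finset (Fin n) → Finpartition (univ : Finset (Fin (n + 1))))
    (hE' : ∀ S ∈ Γs'.parts, IsComplexExt Γs' S (E' S)) :
    unCD Γm Γ₀' + ∑ S ∈ Γs'.parts, unCD Γm (E' S)
      = (Γs'.parts.card + 1) * unCD Γs Γs' + (Γs'.parts.card - 1) * Sm.card + n := by
  classical
  have hm1 := complexExt_samePart_castSucc hm
  have hm2 := complexExt_samePart_last hm
  have e0 : unCD Γm Γ₀' = unCD Γs Γs' + Sm.card := by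
    have := unCD_ext (P' := (∅ : Finset (Fin n))) hm1 (simpleExt_samePart_castSucc h₀') hm2
      (fun i => by simp [simpleExt_samePart_last h₀' i])
    simpa using this
  have eS : ∀ S ∈ Γs'.parts, unCD Γm (E' S)
      = unCD Γs Γs' + ((Sm \ S).card + (S \ Sm).card) := fun S hS =>
    unCD_ext hm1 (complexExt_samePart_castSucc (hE' S hS)) hm2
      (complexExt_samePart_last (hE' S hS))
  rw [e0, Finset.sum_congr rfl eS]
  set k := Γs'.parts.card with hk
  set u := unCD Γs Γs' with hu
  set c := Sm.card with hc
  -- sum of intersection cards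
  have hinter : ∑ S ∈ Γs'.parts, (Sm ∩ S).card = c := by
    rw [← card_biUnion]
    · congr 1
      ext x
      simp only [mem_biUnion, mem_inter]
      constructor
      · rintro ⟨S, _, hx, _⟩; exact hx
      · intro hx
        obtain ⟨S, hS, hxS⟩ := Γs'.exists_mem (mem_univ x)
        exact ⟨S, hS, hx, hxS⟩
    · intro S hS T hT hST
      exact (Γs'.disjoint hS hT hST).mono inter_subset_right inter_subset_right
  have hA : (∑ S ∈ Γs'.parts, (Sm \ S).card) + c = k * c := by
    calc (∑ S ∈ Γs'.parts, (Sm \ S).card) + c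
        = ∑ S ∈ Γs'.parts, ((Sm \ S).card + (Sm ∩ S).card) := by
          rw [Finset.sum_add_distrib, hinter]
      _ = ∑ _S ∈ Γs'.parts, c := by
          refine Finset.sum_congr rfl fun S _ => ?_
          rw [card_sdiff_add_card_inter]
      _ = k * c := by rw [Finset.sum_const, smul_eq_mul]
  have hB : (∑ S ∈ Γs'.parts, (S \ Sm).card) + c = n := by
    calc (∑ S ∈ Γs'.parts, (S \ Sm).card) + c
        = ∑ S ∈ Γs'.parts, ((S \ Sm).card + (S ∩ Sm).card) := by
          rw [Finset.sum_add_distrib]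
          congr 1
          rw [← hinter]
          exact Finset.sum_congr rfl fun S _ => by rw [inter_comm]
      _ = ∑ S ∈ Γs'.parts, S.card := by
          refine Finset.sum_congr rfl fun S _ => ?_
          rw [card_sdiff_add_card_inter]
      _ = n := by rw [Γs'.sum_card_parts, card_univ, Fintype.card_fin]
  have hsum : ∑ S ∈ Γs'.parts, (u + ((Sm \ S).card + (S \ Sm).card))
      = k * u + ((∑ S ∈ Γs'.parts, (Sm \ S).card) + ∑ S ∈ Γs'.parts, (S \ Sm).card) := by
    rw [Finset.sum_add_distrib, Finset.sum_add_distrib, Finset.sum_const, smul_eq_mul]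
  rw [hsum]
  have hkc : (k - 1) * c + c = k * c := by
    rcases Nat.eq_zero_or_pos k with h0 | h0
    · have : c = 0 := by
        have := hA
        rw [h0] at this
        simp at this
        omega
      simp [this]
    · have : k - 1 + 1 = k := Nat.succ_pred_eq_of_pos h0
      calc (k - 1) * c + c = (k - 1 + 1) * c := by ring
        _ = k * c := by rw [this]
  have expand : (k + 1) * u = k * u + u := by ring
  rw [expand]
  omega
end

section
/- For any partitions Γ*, Γ*' of {1,...,n} with n ≥ 1, the sum of unCD distances from the simple extension of Γ* to all extensions of Γ*' is less than or equal to the corresponding sum from any complex extension of Γ*. -/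
open Finset

open scoped Classical

namespace StmtAux

variable {n : ℕ}

lemma mem_image_castSucc {T : Finset (Fin n)} {i : Fin n} :
    i.castSucc ∈ T.image Fin.castSucc ↔ i ∈ T := by
  simp [Fin.castSucc_inj]

lemma last_notMem_image {T : Finset (Fin n)} : Fin.last n ∉ T.image Fin.castSucc := by
  simp only [mem_image]
  rintro ⟨j, -, h⟩
  exact (Fin.castSucc_lt_last j).ne h

lemma samePart_simple_castSucc {Γs : Finpartition (univ : Finset (Fin n))}
    {Γ : Finpartition (univ : Finset (Fin (n + 1)))} (h : IsSimpleExt Γs Γ) (i j : Fin n) :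
    samePart Γ i.castSucc j.castSucc ↔ samePart Γs i j := by
  unfold samePart
  rw [h]
  constructor
  · rintro ⟨B, hB, hi, hj⟩
    rcases mem_insert.1 hB with rfl | hB
    · exact absurd (mem_singleton.1 hi) (Fin.castSucc_lt_last i).ne
    · rcases mem_image.1 hB with ⟨T, hT, rfl⟩
      exact ⟨T, hT, mem_image_castSucc.1 hi, mem_image_castSucc.1 hj⟩
  · rintro ⟨T, hT, hi, hj⟩
    exact ⟨T.image Fin.castSucc, mem_insert_of_mem (mem_image_of_mem _ hT),
      mem_image_of_mem _ hi, mem_image_of_mem _ hj⟩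

lemma samePart_complex_castSucc {Γs : Finpartition (univ : Finset (Fin n))}
    {S : Finset (Fin n)} {Γ : Finpartition (univ : Finset (Fin (n + 1)))}
    (h : IsComplexExt Γs S Γ) (i j : Fin n) :
    samePart Γ i.castSucc j.castSucc ↔ samePart Γs i j := by
  obtain ⟨hS, hparts⟩ := h
  unfold samePart
  rw [hparts]
  constructor
  · rintro ⟨B, hB, hi, hj⟩
    rcases mem_insert.1 hB with rfl | hB
    · have hi' : i ∈ S := by
        rcases mem_insert.1 hi with h' | h'
        · exact absurd h' (Fin.castSucc_lt_last i).ne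
        · exact mem_image_castSucc.1 h'
      have hj' : j ∈ S := by
        rcases mem_insert.1 hj with h' | h'
        · exact absurd h' (Fin.castSucc_lt_last j).ne
        · exact mem_image_castSucc.1 h'
      exact ⟨S, hS, hi', hj'⟩
    · rcases mem_image.1 hB with ⟨T, hT, rfl⟩
      exact ⟨T, mem_of_mem_erase hT, mem_image_castSucc.1 hi, mem_image_castSucc.1 hj⟩
  · rintro ⟨T, hT, hi, hj⟩
    by_cases hTS : T = S
    · subst hTS
      exact ⟨insert (Fin.last n) (T.image Fin.castSucc), mem_insert_self _ _,
        mem_insert_of_mem (mem_image_of_mem _ hi), mem_insert_of_mem (mem_image_of_mem _ hj)⟩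
    · exact ⟨T.image Fin.castSucc,
        mem_insert_of_mem (mem_image_of_mem _ (mem_erase.2 ⟨hTS, hT⟩)),
        mem_image_of_mem _ hi, mem_image_of_mem _ hj⟩

lemma samePart_ext_castSucc {Γs : Finpartition (univ : Finset (Fin n))}
    {Γ : Finpartition (univ : Finset (Fin (n + 1)))} (h : IsExt Γs Γ) (i j : Fin n) :
    samePart Γ i.castSucc j.castSucc ↔ samePart Γs i j := by
  rcases h with h | ⟨S, h⟩
  · exact samePart_simple_castSucc h i j
  · exact samePart_complex_castSucc h i j

lemma not_samePart_simple_last {Γs : Finpartition (univ : Finset (Fin n))}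
    {Γ : Finpartition (univ : Finset (Fin (n + 1)))} (h : IsSimpleExt Γs Γ) (i : Fin n) :
    ¬ samePart Γ i.castSucc (Fin.last n) := by
  rintro ⟨B, hB, hi, hl⟩
  rw [h] at hB
  rcases mem_insert.1 hB with rfl | hB
  · exact (Fin.castSucc_lt_last i).ne (mem_singleton.1 hi)
  · rcases mem_image.1 hB with ⟨T, -, rfl⟩
    exact last_notMem_image hl

lemma samePart_complex_last {Γs : Finpartition (univ : Finset (Fin n))}
    {S : Finset (Fin n)} {Γ : Finpartition (univ : Finset (Fin (n + 1)))}
    (h : IsComplexExt Γs S Γ) (i : Fin n) :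
    samePart Γ i.castSucc (Fin.last n) ↔ i ∈ S := by
  obtain ⟨hS, hparts⟩ := h
  unfold samePart
  rw [hparts]
  constructor
  · rintro ⟨B, hB, hi, hl⟩
    rcases mem_insert.1 hB with rfl | hB
    · rcases mem_insert.1 hi with h' | h'
      · exact absurd h' (Fin.castSucc_lt_last i).ne
      · exact mem_image_castSucc.1 h'
    · rcases mem_image.1 hB with ⟨T, -, rfl⟩
      exact absurd hl last_notMem_image
  · intro hi
    exact ⟨insert (Fin.last n) (S.image Fin.castSucc), mem_insert_self _ _,
      mem_insert_of_mem (mem_image_of_mem _ hi), mem_insert_self _ _⟩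

noncomputable def cardA (Γ₁ Γ₂ : Finpartition (univ : Finset (Fin (n + 1)))) : ℕ :=
  ((univ : Finset (Fin (n + 1) × Fin (n + 1))).filter
    (fun p => (p.1 < p.2 ∧ ¬ (samePart Γ₁ p.1 p.2 ↔ samePart Γ₂ p.1 p.2))
      ∧ ¬ p.2 = Fin.last n)).card

noncomputable def cardB (Γ₁ Γ₂ : Finpartition (univ : Finset (Fin (n + 1)))) : ℕ :=
  ((univ : Finset (Fin n)).filter
    (fun i => ¬ (samePart Γ₁ i.castSucc (Fin.last n) ↔ samePart Γ₂ i.castSucc (Fin.last n)))).card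

lemma unCD_eq (Γ₁ Γ₂ : Finpartition (univ : Finset (Fin (n + 1)))) :
    unCD Γ₁ Γ₂ = cardA Γ₁ Γ₂ + cardB Γ₁ Γ₂ := by
  unfold unCD cardA cardB
  rw [← Finset.card_filter_add_card_filter_not
      (s := (univ : Finset (Fin (n + 1) × Fin (n + 1))).filter
        (fun p => p.1 < p.2 ∧ ¬ (samePart Γ₁ p.1 p.2 ↔ samePart Γ₂ p.1 p.2)))
      (p := fun p => p.2 = Fin.last n), filter_filter, filter_filter, Nat.add_comm]
  congr 1
  · -- card of pairs with p.2 = last equals cardB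
    refine (Finset.card_bij (fun (i : Fin n) (_ : i ∈ (univ : Finset (Fin n)).filter
        (fun i => ¬ (samePart Γ₁ i.castSucc (Fin.last n) ↔ samePart Γ₂ i.castSucc (Fin.last n))))
        => (i.castSucc, Fin.last n)) ?_ ?_ ?_).symm
    · intro i hi
      simp only [mem_filter, mem_univ, true_and] at hi ⊢
      exact ⟨⟨Fin.castSucc_lt_last i, hi⟩, trivial⟩
    · intro i _ j _ hij
      exact Fin.castSucc_inj.1 (congrArg Prod.fst hij)
    · intro p hp
      simp only [mem_filter, mem_univ, true_and] at hp
      obtain ⟨⟨hlt, hiff⟩, hlast⟩ := hp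
      have h1 : p.1 ≠ Fin.last n := by
        intro h
        rw [h, hlast] at hlt
        exact lt_irrefl _ hlt
      obtain ⟨i, hi⟩ := Fin.exists_castSucc_eq.2 h1
      refine ⟨i, ?_, ?_⟩
      · simp only [mem_filter, mem_univ, true_and, hi, ← hlast]
        exact hiff
      · rw [hi, ← hlast]

lemma cardA_congr {Γs : Finpartition (univ : Finset (Fin n))}
    {Γ₁ Γ₁' : Finpartition (univ : Finset (Fin (n + 1)))}
    (h1 : IsExt Γs Γ₁) (h1' : IsExt Γs Γ₁')
    (Γ₂ : Finpartition (univ : Finset (Fin (n + 1)))) :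
    cardA Γ₁ Γ₂ = cardA Γ₁' Γ₂ := by
  unfold cardA
  congr 1
  refine filter_congr fun p _ => ?_
  by_cases hlt : p.1 < p.2
  · by_cases hl : p.2 = Fin.last n
    · simp [hl]
    · have h1ne : p.1 ≠ Fin.last n := by
        intro h
        exact hl (le_antisymm (Fin.le_last _) (h ▸ le_of_lt hlt))
      obtain ⟨j, hj⟩ := Fin.exists_castSucc_eq.2 hl
      obtain ⟨i, hi⟩ := Fin.exists_castSucc_eq.2 h1ne
      rw [← hi, ← hj, samePart_ext_castSucc h1, samePart_ext_castSucc h1']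
  · simp [hlt]

lemma cardB_simple_simple {Γs Γs' : Finpartition (univ : Finset (Fin n))}
    {Γ₁ Γ₂ : Finpartition (univ : Finset (Fin (n + 1)))}
    (h1 : IsSimpleExt Γs Γ₁) (h2 : IsSimpleExt Γs' Γ₂) : cardB Γ₁ Γ₂ = 0 := by
  unfold cardB
  rw [Finset.card_eq_zero, Finset.filter_eq_empty_iff]
  intro i _
  simp [not_samePart_simple_last h1 i, not_samePart_simple_last h2 i]

lemma cardB_complex_simple {Γs Γs' : Finpartition (univ : Finset (Fin n))}
    {Sm : Finset (Fin n)} {Γ₁ Γ₂ : Finpartition (univ : Finset (Fin (n + 1)))}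
    (h1 : IsComplexExt Γs Sm Γ₁) (h2 : IsSimpleExt Γs' Γ₂) : cardB Γ₁ Γ₂ = Sm.card := by
  unfold cardB
  have : ∀ i : Fin n,
      (¬ (samePart Γ₁ i.castSucc (Fin.last n) ↔ samePart Γ₂ i.castSucc (Fin.last n))) ↔ i ∈ Sm := by
    intro i
    simp [samePart_complex_last h1 i, not_samePart_simple_last h2 i]
  rw [filter_congr (fun i _ => this i), Finset.filter_univ_mem]

lemma cardB_simple_complex {Γs Γs' : Finpartition (univ : Finset (Fin n))}
    {S : Finset (Fin n)} {Γ₁ Γ₂ : Finpartition (univ : Finset (Fin (n + 1)))}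
    (h1 : IsSimpleExt Γs Γ₁) (h2 : IsComplexExt Γs' S Γ₂) : cardB Γ₁ Γ₂ = S.card := by
  unfold cardB
  have : ∀ i : Fin n,
      (¬ (samePart Γ₁ i.castSucc (Fin.last n) ↔ samePart Γ₂ i.castSucc (Fin.last n))) ↔ i ∈ S := by
    intro i
    simp [samePart_complex_last h2 i, not_samePart_simple_last h1 i]
  rw [filter_congr (fun i _ => this i), Finset.filter_univ_mem]

lemma cardB_complex_complex_ge {Γs Γs' : Finpartition (univ : Finset (Fin n))}
    {Sm S : Finset (Fin n)} {Γ₁ Γ₂ : Finpartition (univ : Finset (Fin (n + 1)))}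
    (h1 : IsComplexExt Γs Sm Γ₁) (h2 : IsComplexExt Γs' S Γ₂) :
    (S \ Sm).card ≤ cardB Γ₁ Γ₂ := by
  unfold cardB
  apply card_le_card
  intro i hi
  rw [mem_sdiff] at hi
  simp only [mem_filter, mem_univ, true_and,
    samePart_complex_last h1 i, samePart_complex_last h2 i]
  tauto

lemma sum_inter_le {Γs' : Finpartition (univ : Finset (Fin n))} (Sm : Finset (Fin n)) :
    ∑ S ∈ Γs'.parts, (S ∩ Sm).card ≤ Sm.card := by
  have hdisj : ∀ x ∈ Γs'.parts, ∀ y ∈ Γs'.parts, x ≠ y → Disjoint (x ∩ Sm) (y ∩ Sm) := by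
    intro x hx y hy hxy
    exact Disjoint.mono inter_subset_left inter_subset_left
      (Γs'.supIndep.pairwiseDisjoint hx hy hxy)
  rw [← Finset.card_biUnion hdisj]
  apply card_le_card
  intro i hi
  rw [mem_biUnion] at hi
  obtain ⟨S, _, hiS⟩ := hi
  exact (mem_inter.1 hiS).2

end StmtAux

open StmtAux in
theorem stmt12 {n : ℕ} (hn : 1 ≤ n) {Γs Γs' : Finpartition (univ : Finset (Fin n))} {Sm : Finset (Fin n)}
    {Γ₀ Γm Γ₀' : Finpartition (univ : Finset (Fin (n + 1)))}
    (h₀ : IsSimpleExt Γs Γ₀) (hm : IsComplexExt Γs Sm Γm) (h₀' : IsSimpleExt Γs' Γ₀')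
    (E' : Finset (Fin n) → Finpartition (univ : Finset (Fin (n + 1))))
    (hE' : ∀ S ∈ Γs'.parts, IsComplexExt Γs' S (E' S)) :
    unCD Γ₀ Γ₀' + ∑ S ∈ Γs'.parts, unCD Γ₀ (E' S)
      ≤ unCD Γm Γ₀' + ∑ S ∈ Γs'.parts, unCD Γm (E' S) := by
  have hext₀ : IsExt Γs Γ₀ := Or.inl h₀
  have hextm : IsExt Γs Γm := Or.inr ⟨Sm, hm⟩
  have hA : ∀ X, cardA Γ₀ X = cardA Γm X := fun X => cardA_congr hext₀ hextm X
  simp only [unCD_eq, hA, Finset.sum_add_distrib]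
  have hB0 : cardB Γ₀ Γ₀' = 0 := cardB_simple_simple h₀ h₀'
  have hBm : cardB Γm Γ₀' = Sm.card := cardB_complex_simple hm h₀'
  have hBs : ∑ S ∈ Γs'.parts, cardB Γ₀ (E' S) = ∑ S ∈ Γs'.parts, S.card :=
    Finset.sum_congr rfl fun S hS => cardB_simple_complex h₀ (hE' S hS)
  have hkey : ∑ S ∈ Γs'.parts, S.card ≤ Sm.card + ∑ S ∈ Γs'.parts, cardB Γm (E' S) := by
    have h1 : ∀ S ∈ Γs'.parts, S.card ≤ (S ∩ Sm).card + cardB Γm (E' S) := by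
      intro S hS
      calc S.card = (S ∩ Sm).card + (S \ Sm).card := (card_inter_add_card_sdiff S Sm).symm
        _ ≤ (S ∩ Sm).card + cardB Γm (E' S) :=
          Nat.add_le_add_left (cardB_complex_complex_ge hm (hE' S hS)) _
    calc ∑ S ∈ Γs'.parts, S.card
        ≤ ∑ S ∈ Γs'.parts, ((S ∩ Sm).card + cardB Γm (E' S)) := Finset.sum_le_sum h1
      _ = (∑ S ∈ Γs'.parts, (S ∩ Sm).card) + ∑ S ∈ Γs'.parts, cardB Γm (E' S) :=
          Finset.sum_add_distrib
      _ ≤ Sm.card + ∑ S ∈ Γs'.parts, cardB Γm (E' S) :=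
          Nat.add_le_add_right (sum_inter_le Sm) _
  rw [hB0, hBm, hBs]
  omega
end

section
/- For every n ≥ 2, among all partitions of {1,...,n}, the total-separation partition (every element in its own singleton block) has the minimal sum of unCD distances to all other partitions of {1,...,n}. -/
open Finset

section aux
variable {n : ℕ}

lemma samePart_refl (Γ : Finpartition (univ : Finset (Fin n))) (i : Fin n) :
    samePart Γ i i := by
  obtain ⟨S, hS, hi⟩ := Γ.exists_mem (mem_univ i)
  exact ⟨S, hS, hi, hi⟩

lemma samePart_symm {Γ : Finpartition (univ : Finset (Fin n))} {i j : Fin n}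
    (h : samePart Γ i j) : samePart Γ j i := by
  obtain ⟨S, hS, hi, hj⟩ := h; exact ⟨S, hS, hj, hi⟩

lemma samePart_trans {Γ : Finpartition (univ : Finset (Fin n))} {i j k : Fin n}
    (h1 : samePart Γ i j) (h2 : samePart Γ j k) : samePart Γ i k := by
  obtain ⟨S, hS, hi, hj⟩ := h1
  obtain ⟨T, hT, hj', hk⟩ := h2
  cases Γ.eq_of_mem_parts hS hT hj hj'
  exact ⟨S, hS, hi, hk⟩

lemma samePart_iff_mem_part (Γ : Finpartition (univ : Finset (Fin n))) (i j : Fin n) :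
    samePart Γ i j ↔ j ∈ Γ.part i := by
  constructor
  · rintro ⟨S, hS, hi, hj⟩
    rwa [Γ.part_eq_of_mem hS hi]
  · intro h
    exact ⟨Γ.part i, Γ.part_mem.mpr (mem_univ i), Γ.mem_part (mem_univ i), h⟩

lemma eq_of_samePart {Γ Γ' : Finpartition (univ : Finset (Fin n))}
    (h : ∀ i j, samePart Γ i j ↔ samePart Γ' i j) : Γ = Γ' := by
  have key : ∀ (Δ Δ' : Finpartition (univ : Finset (Fin n))),
      (∀ i j, samePart Δ i j ↔ samePart Δ' i j) → Δ.parts ⊆ Δ'.parts := by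
    intro Δ Δ' hh S hS
    obtain ⟨a, ha⟩ := Δ.nonempty_of_mem_parts hS
    have : S = Δ'.part a := by
      ext x
      rw [← samePart_iff_mem_part]
      rw [← hh]
      constructor
      · intro hx
        exact ⟨S, hS, ha, hx⟩
      · rintro ⟨T, hT, ha', hx⟩
        cases Δ.eq_of_mem_parts hS hT ha ha'
        exact hx
    rw [this]
    exact Δ'.part_mem.mpr (mem_univ a)
  apply Finpartition.ext
  apply Finset.Subset.antisymm (key _ _ h) (key _ _ fun i j => (h i j).symm)

lemma samePart_bot {i j : Fin n} : samePart (⊥ : Finpartition (univ : Finset (Fin n))) i j ↔ i = j := by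
  constructor
  · rintro ⟨S, hS, hi, hj⟩
    rw [Finpartition.mem_bot_iff] at hS
    obtain ⟨a, -, rfl⟩ := hS
    simp only [mem_singleton] at hi hj
    rw [hi, hj]
  · rintro rfl; exact samePart_refl _ _

/-- Setoid obtained from `Γ` by separating `j` into its own class. -/
def splitSetoid (Γ : Finpartition (univ : Finset (Fin n))) (j : Fin n) : Setoid (Fin n) where
  r x y := x = y ∨ (x ≠ j ∧ y ≠ j ∧ samePart Γ x y)
  iseqv := by
    constructor
    · intro x; exact Or.inl rfl
    · rintro x y (rfl | ⟨h1, h2, h3⟩)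
      · exact Or.inl rfl
      · exact Or.inr ⟨h2, h1, samePart_symm h3⟩
    · rintro x y z (rfl | ⟨h1, h2, h3⟩) h
      · exact h
      · rcases h with rfl | ⟨h4, h5, h6⟩
        · exact Or.inr ⟨h1, h2, h3⟩
        · exact Or.inr ⟨h1, h5, samePart_trans h3 h6⟩

open scoped Classical in
lemma samePart_split (Γ : Finpartition (univ : Finset (Fin n))) (j x y : Fin n) :
    samePart (Finpartition.ofSetoid (splitSetoid Γ j)) x y ↔ (splitSetoid Γ j).r x y := by
  rw [samePart_iff_mem_part, Finpartition.mem_part_ofSetoid_iff_rel]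

open scoped Classical in
lemma key_card {i j : Fin n} (hij : i ≠ j) :
    (univ.filter fun Γ' : Finpartition (univ : Finset (Fin n)) => samePart Γ' i j).card ≤
    (univ.filter fun Γ' : Finpartition (univ : Finset (Fin n)) => ¬ samePart Γ' i j).card := by
  apply Finset.card_le_card_of_injOn
      (fun Γ => Finpartition.ofSetoid (splitSetoid Γ j))
  · intro Γ hΓ
    simp only [mem_filter, coe_filter, Set.mem_setOf_eq, mem_univ, true_and] at hΓ ⊢
    rw [samePart_split]
    rintro (rfl | ⟨-, h2, -⟩)
    · exact hij rfl
    · exact h2 rfl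
  · intro Γ₁ h₁ Γ₂ h₂ heq
    simp only [coe_filter, Set.mem_setOf_eq, mem_univ, true_and] at h₁ h₂
    have hr : ∀ x y, (splitSetoid Γ₁ j).r x y ↔ (splitSetoid Γ₂ j).r x y := by
      intro x y
      have heq' : Finpartition.ofSetoid (splitSetoid Γ₁ j) =
          Finpartition.ofSetoid (splitSetoid Γ₂ j) := heq
      rw [← samePart_split, ← samePart_split, heq']
    have main : ∀ (Δ₁ Δ₂ : Finpartition (univ : Finset (Fin n))),
        samePart Δ₁ i j → samePart Δ₂ i j →
        (∀ x y, (splitSetoid Δ₁ j).r x y → (splitSetoid Δ₂ j).r x y) →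
        ∀ x y, samePart Δ₁ x y → samePart Δ₂ x y := by
      intro Δ₁ Δ₂ hd₁ hd₂ hrr x y hxy
      have step : ∀ x, x ≠ j → samePart Δ₁ x j → samePart Δ₂ x j := by
        intro x hxj hx
        by_cases hxi : x = i
        · subst hxi; exact hd₂
        · have hxi' : samePart Δ₁ x i :=
            samePart_trans hx (samePart_symm hd₁)
          have := hrr x i (Or.inr ⟨hxj, hij, hxi'⟩)
          rcases this with rfl | ⟨-, -, h⟩
          · exact hd₂
          · exact samePart_trans h hd₂
      by_cases hx : x = j <;> by_cases hy : y = j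
      · subst hx; subst hy; exact samePart_refl _ _
      · subst hx
        exact samePart_symm (step y hy (samePart_symm hxy))
      · subst hy
        exact step x hx hxy
      · rcases hrr x y (Or.inr ⟨hx, hy, hxy⟩) with rfl | ⟨-, -, h⟩
        · exact samePart_refl _ _
        · exact h
    apply eq_of_samePart
    intro x y
    exact ⟨main Γ₁ Γ₂ h₁ h₂ (fun a b hab => (hr a b).mp hab) x y,
           main Γ₂ Γ₁ h₂ h₁ (fun a b hab => (hr a b).mpr hab) x y⟩

end aux

open scoped Classical in
lemma unCD_self {n : ℕ} (Γ : Finpartition (univ : Finset (Fin n))) : unCD Γ Γ = 0 := by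
  rw [unCD, Finset.card_eq_zero, Finset.filter_eq_empty_iff]
  intro p _
  tauto

open scoped Classical in
lemma sum_unCD_expand {n : ℕ} (Γ : Finpartition (univ : Finset (Fin n))) :
    ∑ Γ' : Finpartition (univ : Finset (Fin n)), unCD Γ Γ' =
      ∑ p : Fin n × Fin n, (univ.filter fun Γ' : Finpartition (univ : Finset (Fin n)) =>
        p.1 < p.2 ∧ ¬ (samePart Γ p.1 p.2 ↔ samePart Γ' p.1 p.2)).card := by
  simp only [unCD, Finset.card_filter]
  rw [Finset.sum_comm]

theorem stmt14 {n : ℕ} (hn : 2 ≤ n) (Γ : Finpartition (univ : Finset (Fin n))) :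
    ∑ Γ' ∈ univ.erase (⊥ : Finpartition (univ : Finset (Fin n))), unCD (⊥ : Finpartition (univ : Finset (Fin n))) Γ'
      ≤ ∑ Γ' ∈ univ.erase Γ, unCD Γ Γ' := by
  classical
  rw [Finset.sum_erase univ (unCD_self ⊥), Finset.sum_erase univ (unCD_self Γ),
    sum_unCD_expand, sum_unCD_expand]
  apply Finset.sum_le_sum
  intro p _
  by_cases hlt : p.1 < p.2
  · have hne : p.1 ≠ p.2 := ne_of_lt hlt
    have hbot : ¬ samePart (⊥ : Finpartition (univ : Finset (Fin n))) p.1 p.2 := by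
      rw [samePart_bot]; exact hne
    have hL : (univ.filter fun Γ' : Finpartition (univ : Finset (Fin n)) =>
        p.1 < p.2 ∧ ¬ (samePart ⊥ p.1 p.2 ↔ samePart Γ' p.1 p.2)) =
        univ.filter fun Γ' : Finpartition (univ : Finset (Fin n)) =>
          samePart Γ' p.1 p.2 := by
      apply Finset.filter_congr
      intro Γ' _
      simp only [hlt, true_and]
      tauto
    rw [hL]
    by_cases hs : samePart Γ p.1 p.2
    · have hR : (univ.filter fun Γ' : Finpartition (univ : Finset (Fin n)) =>
          p.1 < p.2 ∧ ¬ (samePart Γ p.1 p.2 ↔ samePart Γ' p.1 p.2)) =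
          univ.filter fun Γ' : Finpartition (univ : Finset (Fin n)) =>
            ¬ samePart Γ' p.1 p.2 := by
        apply Finset.filter_congr
        intro Γ' _
        simp only [hlt, true_and]
        tauto
      rw [hR]
      exact key_card hne
    · have hR : (univ.filter fun Γ' : Finpartition (univ : Finset (Fin n)) =>
          p.1 < p.2 ∧ ¬ (samePart Γ p.1 p.2 ↔ samePart Γ' p.1 p.2)) =
          univ.filter fun Γ' : Finpartition (univ : Finset (Fin n)) =>
            samePart Γ' p.1 p.2 := by
        apply Finset.filter_congr
        intro Γ' _
        simp only [hlt, true_and]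
        tauto
      rw [hR]
  · simp only [hlt, false_and]
    simp
end
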